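/- Let f : ℝⁿ → ℝⁿ be continuous with f(0) = 0, and suppose there exist a continuously differentiable function V : ℝⁿ → ℝ and constants c, r > 0 such that V(0) = 0, V(x) > 0 for all x ≠ 0, ∇V(x)·f(x) < 0 for all x ≠ 0, and ∇V(x)·f(x) < -c for all x with ‖x‖ ≥ r. Then the origin is a globally asymptotically stable equilibrium of ẋ = f(x): it is Lyapunov stable and every solution converges to 0 as t → ∞. -/

import Mathlib

open Set Metric Filter Topology

/-- A continuous function negative on a compact set is bounded away from zero. -/
lemma aux_neg_bound_on_compact {E : Type*} [TopologicalSpace E]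
    (g : E → ℝ) (hg : Continuous g) (K : Set E) (hK : IsCompact K)
    (hneg : ∀ y ∈ K, g y < 0) : ∃ k > 0, ∀ y ∈ K, g y ≤ -k := by
  rcases K.eq_empty_or_nonempty with rfl | hne
  · exact ⟨1, one_pos, by simp⟩
  obtain ⟨y0, hy0, hmax⟩ := hK.exists_isMaxOn hne hg.continuousOn
  refine ⟨-g y0, by linarith [hneg y0 hy0], fun y hy => ?_⟩
  have := hmax hy
  simp only [neg_neg]
  exact this

/-- Decay estimate along a solution: if the Lyapunov derivative is at most `-k`
on `[a,b]`, then `V` decreases at rate at least `k`. -/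
lemma aux_decay {E : Type*} [NormedAddCommGroup E] [NormedSpace ℝ E]
    (f : E → E) (V : E → ℝ) (hVd : Differentiable ℝ V)
    (x : ℝ → E) (hx : ∀ t, 0 ≤ t → HasDerivAt x (f (x t)) t)
    (k a b : ℝ) (ha : 0 ≤ a) (hab : a ≤ b)
    (hk : ∀ t ∈ Set.Icc a b, fderiv ℝ V (x t) (f (x t)) ≤ -k) :
    V (x b) ≤ V (x a) - k * (b - a) := by
  rcases eq_or_lt_of_le hab with rfl | hab'
  · simp
  have hw : ∀ t ∈ Set.Icc a b,
      HasDerivAt (fun t => V (x t)) (fderiv ℝ V (x t) (f (x t))) t := by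
    intro t ht
    exact (hVd (x t)).hasFDerivAt.comp_hasDerivAt t (hx t (ha.trans ht.1))
  obtain ⟨ξ, hξ, hslope⟩ := exists_hasDerivAt_eq_slope (fun t => V (x t))
    (fun t => fderiv ℝ V (x t) (f (x t))) hab'
    (fun t ht => (hw t ht).continuousAt.continuousWithinAt)
    (fun t ht => hw t ⟨ht.1.le, ht.2.le⟩)
  have hb : (0:ℝ) < b - a := by linarith
  have h1 : (V (x b) - V (x a)) / (b - a) ≤ -k := by
    rw [← hslope]; exact hk ξ ⟨hξ.1.le, hξ.2.le⟩
  have := (div_le_iff₀ hb).mp h1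
  linarith

/-- Lemma 1 of the paper: global asymptotic stability without radial unboundedness. -/
theorem stmt_0 {n : ℕ}
    (f : EuclideanSpace ℝ (Fin n) → EuclideanSpace ℝ (Fin n))
    (hf : Continuous f) (hf0 : f 0 = 0)
    (V : EuclideanSpace ℝ (Fin n) → ℝ) (hV : ContDiff ℝ 1 V)
    (c r : ℝ) (hc : 0 < c) (hr : 0 < r)
    (hV0 : V 0 = 0) (hVpos : ∀ x, x ≠ 0 → 0 < V x)
    (hdec : ∀ x, x ≠ 0 → fderiv ℝ V x (f x) < 0)
    (hdecc : ∀ x, r ≤ ‖x‖ → fderiv ℝ V x (f x) < -c) :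
    (∀ ε > 0, ∃ δ > 0, ∀ x : ℝ → EuclideanSpace ℝ (Fin n),
        (∀ t, 0 ≤ t → HasDerivAt x (f (x t)) t) → ‖x 0‖ ≤ δ →
        ∀ t, 0 ≤ t → ‖x t‖ ≤ ε) ∧
    (∀ x : ℝ → EuclideanSpace ℝ (Fin n),
        (∀ t, 0 ≤ t → HasDerivAt x (f (x t)) t) →
        Filter.Tendsto x Filter.atTop (nhds 0)) := by
  rcases Nat.eq_zero_or_pos n with hn | hn
  · subst hn
    constructor
    · intro ε hε
      refine ⟨ε, hε, fun x _ _ t _ => ?_⟩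
      have : x t = 0 := Subsingleton.elim _ _
      rw [this]; simpa using hε.le
    · intro x _
      have : x = fun _ => 0 := funext fun t => Subsingleton.elim _ _
      rw [this]; exact tendsto_const_nhds
  haveI : Nonempty (Fin n) := ⟨⟨0, hn⟩⟩
  have hVd : Differentiable ℝ V := hV.differentiable one_ne_zero
  set g : EuclideanSpace ℝ (Fin n) → ℝ := fun y => fderiv ℝ V y (f y) with hg_def
  have hgcont : Continuous g := (hV.continuous_fderiv one_ne_zero).clm_apply hf
  have hg0 : g 0 = 0 := by simp [hg_def, hf0]
  have hVnonneg : ∀ y, 0 ≤ V y := by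
    intro y
    by_cases h : y = 0
    · simp [h, hV0]
    · exact (hVpos y h).le
  have hgle : ∀ y, g y ≤ 0 := by
    intro y
    by_cases h : y = 0
    · simp [h, hg0]
    · exact (hdec y h).le
  -- monotonicity of V along solutions
  have mono : ∀ (x : ℝ → EuclideanSpace ℝ (Fin n)),
      (∀ t, 0 ≤ t → HasDerivAt x (f (x t)) t) →
      ∀ s t : ℝ, 0 ≤ s → s ≤ t → V (x t) ≤ V (x s) := by
    intro x hx s t hs hst
    have := aux_decay f V hVd x hx 0 s t hs hst (fun u _ => by simpa using hgle (x u))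
    linarith
  -- continuity of the norm of a solution
  have normcont : ∀ (x : ℝ → EuclideanSpace ℝ (Fin n)),
      (∀ t, 0 ≤ t → HasDerivAt x (f (x t)) t) →
      ∀ a b : ℝ, 0 ≤ a → ContinuousOn (fun t => ‖x t‖) (Set.Icc a b) := by
    intro x hx a b ha t ht
    exact ((hx t (ha.trans ht.1)).continuousAt.norm).continuousWithinAt
  constructor
  · -- stability
    intro ε hε
    obtain ⟨y0, hy0, hmin⟩ := (isCompact_sphere (0 : EuclideanSpace ℝ (Fin n)) ε).exists_isMinOn
      (NormedSpace.sphere_nonempty.mpr hε.le) hV.continuous.continuousOn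
    set m := V y0 with hm_def
    have hy0ne : y0 ≠ 0 := by
      intro h
      rw [h, mem_sphere_zero_iff_norm] at hy0
      rw [norm_zero] at hy0
      linarith
    have hm : 0 < m := hVpos y0 hy0ne
    have hev : ∀ᶠ y in 𝓝 (0 : EuclideanSpace ℝ (Fin n)), V y < m := by
      have hcontV : Filter.Tendsto V (𝓝 (0 : EuclideanSpace ℝ (Fin n))) (𝓝 0) :=
        hV.continuous.tendsto' 0 0 hV0
      exact hcontV (Iio_mem_nhds hm)
    obtain ⟨δ', hδ', hball⟩ := Metric.eventually_nhds_iff_ball.mp hev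
    refine ⟨min (δ'/2) (ε/2), by positivity, fun x hx hx0 t ht => ?_⟩
    have hx0' : V (x 0) < m := by
      apply hball
      rw [mem_ball_zero_iff]
      calc ‖x 0‖ ≤ min (δ'/2) (ε/2) := hx0
        _ ≤ δ'/2 := min_le_left _ _
        _ < δ' := by linarith
    have hVlt : ∀ s, 0 ≤ s → V (x s) < m := fun s hs =>
      lt_of_le_of_lt (mono x hx 0 s le_rfl hs) hx0'
    by_contra hcon
    push_neg at hcon
    have h0ε : ‖x 0‖ < ε := lt_of_le_of_lt hx0 (by
      calc min (δ'/2) (ε/2) ≤ ε/2 := min_le_right _ _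
        _ < ε := by linarith)
    have hmem : ε ∈ Set.Icc ‖x 0‖ ‖x t‖ := ⟨h0ε.le, hcon.le⟩
    obtain ⟨ξ, hξ, hξε⟩ := intermediate_value_Icc ht (normcont x hx 0 t le_rfl) hmem
    have hle : m ≤ V (x ξ) := hmin (by rw [mem_sphere_zero_iff_norm]; exact hξε)
    exact absurd (hVlt ξ hξ.1) (not_lt.mpr hle)
  · -- convergence
    intro x hx
    -- the solution visits the ball of radius r infinitely often
    have visits : ∀ T : ℝ, 0 ≤ T → ∃ t, T ≤ t ∧ ‖x t‖ < r := by
      intro T hT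
      by_contra hcon
      push_neg at hcon
      have hs : 0 ≤ (V (x T) + 1) / c := by
        have := hVnonneg (x T); positivity
      have hdecay := aux_decay f V hVd x hx c T (T + (V (x T) + 1) / c) hT (by linarith)
        (fun u hu => (hdecc (x u) (hcon u hu.1)).le)
      have h3 : c * (T + (V (x T) + 1) / c - T) = V (x T) + 1 := by
        field_simp
        ring
      have := hVnonneg (x (T + (V (x T) + 1) / c))
      linarith
    -- V along the solution eventually gets below every L > 0
    have Vsmall : ∀ L : ℝ, 0 < L → ∃ T : ℝ, 0 ≤ T ∧ ∀ t, T ≤ t → V (x t) < L := by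
      intro L hL
      by_contra hcon
      push_neg at hcon
      have hall : ∀ t : ℝ, 0 ≤ t → L ≤ V (x t) := by
        intro t ht
        by_contra h
        push_neg at h
        obtain ⟨t', ht', hv⟩ := hcon t ht
        exact absurd (lt_of_le_of_lt (mono x hx t t' ht ht') h) (not_lt.mpr hv)
      set K : Set (EuclideanSpace ℝ (Fin n)) := {y | ‖y‖ ≤ r ∧ L ≤ V y} with hK_def
      have hKclosed : IsClosed K :=
        (isClosed_le continuous_norm continuous_const).inter
          (isClosed_le continuous_const hV.continuous)
      have hKcompact : IsCompact K :=
        (isCompact_closedBall (0 : EuclideanSpace ℝ (Fin n)) r).of_isClosed_subset hKclosed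
          (fun y hy => by simpa [Metric.mem_closedBall, dist_zero_right] using hy.1)
      have hKneg : ∀ y ∈ K, g y < 0 := by
        intro y hy
        apply hdec
        intro h
        have h2 := hy.2
        rw [h, hV0] at h2
        exact absurd h2 (not_le.mpr hL)
      obtain ⟨k, hk, hkbound⟩ := aux_neg_bound_on_compact g hgcont K hKcompact hKneg
      set k' := min k c with hk'_def
      have hk' : 0 < k' := lt_min hk hc
      have hgbound : ∀ t : ℝ, 0 ≤ t → g (x t) ≤ -k' := by
        intro t ht
        by_cases hcase : r ≤ ‖x t‖
        · calc g (x t) ≤ -c := (hdecc (x t) hcase).le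
            _ ≤ -k' := by simp [hk'_def]
        · have : x t ∈ K := ⟨(not_le.mp hcase).le, hall t ht⟩
          calc g (x t) ≤ -k := hkbound _ this
            _ ≤ -k' := by simp [hk'_def]
      have hs : 0 ≤ (V (x 0) + 1) / k' := by
        have := hVnonneg (x 0); positivity
      have hdecay := aux_decay f V hVd x hx k' 0 ((V (x 0) + 1) / k') le_rfl hs
        (fun u hu => hgbound u hu.1)
      have h3 : k' * ((V (x 0) + 1) / k' - 0) = V (x 0) + 1 := by
        field_simp
        ring
      have := hVnonneg (x ((V (x 0) + 1) / k'))
      linarith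
    -- now prove convergence
    rw [NormedAddCommGroup.tendsto_nhds_zero]
    intro ε hε
    rw [Filter.eventually_atTop]
    set ρ := min ε r with hρ_def
    have hρ : 0 < ρ := lt_min hε hr
    have hρr : ρ ≤ r := min_le_right _ _
    have hρε : ρ ≤ ε := min_le_left _ _
    set A : Set (EuclideanSpace ℝ (Fin n)) := {y | ρ ≤ ‖y‖ ∧ ‖y‖ ≤ r} with hA_def
    have hAclosed : IsClosed A :=
      (isClosed_le continuous_const continuous_norm).inter
        (isClosed_le continuous_norm continuous_const)
    have hAcompact : IsCompact A :=
      (isCompact_closedBall (0 : EuclideanSpace ℝ (Fin n)) r).of_isClosed_subset hAclosed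
        (fun y hy => by simpa [Metric.mem_closedBall, dist_zero_right] using hy.2)
    have hAne : A.Nonempty := by
      obtain ⟨y, hy⟩ := (NormedSpace.sphere_nonempty
        (x := (0 : EuclideanSpace ℝ (Fin n))) (r := ρ)).mpr hρ.le
      rw [mem_sphere_zero_iff_norm] at hy
      exact ⟨y, by rw [hy], by rw [hy]; exact hρr⟩
    obtain ⟨y0, hy0, hmin⟩ := hAcompact.exists_isMinOn hAne hV.continuous.continuousOn
    set m := V y0 with hm_def
    have hy0ne : y0 ≠ 0 := by
      intro h
      have h1 := hy0.1
      rw [h, norm_zero] at h1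
      linarith
    have hm : 0 < m := hVpos y0 hy0ne
    obtain ⟨T, hT, hVT⟩ := Vsmall m hm
    obtain ⟨T', hTT', hT'r⟩ := visits T hT
    have hT'0 : 0 ≤ T' := hT.trans hTT'
    have hT'ρ : ‖x T'‖ < ρ := by
      by_contra h
      push_neg at h
      have hmem : x T' ∈ A := ⟨h, hT'r.le⟩
      exact absurd (hVT T' hTT') (not_lt.mpr (hmin hmem))
    refine ⟨T', fun t ht => ?_⟩
    by_contra h
    push_neg at h
    have hρt : ρ ≤ ‖x t‖ := hρε.trans h
    have hmem : ρ ∈ Set.Icc ‖x T'‖ ‖x t‖ := ⟨hT'ρ.le, hρt⟩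
    obtain ⟨ξ, hξ, hξρ⟩ := intermediate_value_Icc ht (normcont x hx T' t hT'0) hmem
    have hξA : x ξ ∈ A := ⟨hξρ.ge, hξρ.le.trans hρr⟩
    exact absurd (hVT ξ (hTT'.trans hξ.1)) (not_lt.mpr (hmin hξA))
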